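/- Let T and w be positive integers with T < 2^128 and w < 2^64, and suppose (T · w) mod 2^137 ≥ 2^137 − 2^64. Set n = 1 + ⌊T · w / 2^137⌋. Then the rational number n/w is a continued-fraction convergent of the rational number T/2^137, i.e., there exists an index k such that n/w equals the k-th convergent of the continued fraction expansion of T/2^137. -/

import Mathlib

namespace GenContFract

lemma my_cast_contsAux (q : ℚ) :
    ∀ m : ℕ, (GenContFract.of ((q : ℝ))).contsAux m = ((GenContFract.of q).contsAux m).map ((↑) : ℚ → ℝ)
  | 0 => by simp [contsAux, Pair.map]
  | 1 => by
    rw [← GenContFract.coe_of_rat_eq (K := ℝ) (q := q) rfl]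
    simp [contsAux, Pair.map]
  | (m+2) => by
    have h1 := my_cast_contsAux q m
    have h2 := my_cast_contsAux q (m+1)
    rw [← GenContFract.coe_of_rat_eq (K := ℝ) (q := q) rfl] at h1 h2 ⊢
    show GenContFract.contsAux _ (m+2) = _
    simp only [contsAux, Stream'.Seq.map_get?]
    cases hst : (GenContFract.of q).s.get? m with
    | none => simpa [contsAux, hst] using h2
    | some gp =>
      simp only [hst, Option.map_some]
      rw [h1, h2]
      simp [contsAux, hst, nextConts, nextNum, nextDen, Pair.map]

lemma my_cast_convs (q : ℚ) (k : ℕ) :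
    (GenContFract.of ((q : ℝ))).convs k = ((GenContFract.of q).convs k : ℝ) := by
  have h : (GenContFract.of ((q : ℝ))).contsAux.tail.get k
      = Pair.map Rat.cast ((GenContFract.of q).contsAux.tail.get k) :=
    my_cast_contsAux q (k+1)
  simp only [convs, nums, dens, conts, Stream'.map, h, Pair.map]
  push_cast
  rfl

end GenContFract

/-- If `T < 2^128`, `w < 2^64` are positive integers with
`(T * w) % 2^137 ≥ 2^137 - 2^64`, then with `n = 1 + ⌊T*w/2^137⌋`,
the rational number `n/w` is a continued-fraction convergent of `T/2^137`. -/
theorem is_convergent (T w : ℕ) (hT : 0 < T) (hw : 0 < w)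
    (hT' : T < 2 ^ 128) (hw' : w < 2 ^ 64)
    (h : (T * w) % 2 ^ 137 ≥ 2 ^ 137 - 2 ^ 64)
    (n : ℕ) (hn : n = 1 + T * w / 2 ^ 137) :
    ∃ k : ℕ, (GenContFract.of ((T : ℚ) / 2 ^ 137)).convs k = (n : ℚ) / w := by
  set M : ℕ := 2 ^ 137 with hM
  set d : ℕ := M - (T * w) % M with hd
  have hr : (T * w) % M < M := Nat.mod_lt _ (by positivity)
  have hd1 : 1 ≤ d := by omega
  have hd64 : d ≤ 2 ^ 64 := by
    have : (2:ℕ) ^ 64 ≤ 2 ^ 137 := by norm_num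
    omega
  have hnM : n * M = T * w + d := by
    have := Nat.div_add_mod (T * w) M
    have : n * M = M * (T * w / M) + M := by rw [hn]; ring
    omega
  set q : ℚ := (n : ℚ) / w with hq
  -- denominator bound
  have hden : (q.den : ℕ) ≤ w := by
    have hdvd : (q.den : ℤ) ∣ (w : ℤ) := by
      have : q = Rat.divInt (n : ℤ) (w : ℤ) := by
        rw [Rat.divInt_eq_div]; push_cast [hq]; ring
      rw [this]; exact Rat.den_dvd _ _
    exact_mod_cast Int.le_of_dvd (by exact_mod_cast hw) hdvd
  have hdenpos : 0 < q.den := Rat.pos q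
  -- the key inequality over ℚ
  have hwQ : (0:ℚ) < w := by exact_mod_cast hw
  have hMQ : (0:ℚ) < (M:ℚ) := by positivity
  have hdiff : q - (T:ℚ) / M = (d : ℚ) / (M * w) := by
    have : (n:ℚ) * M = T * w + d := by exact_mod_cast hnM
    rw [hq, div_sub_div _ _ hwQ.ne' hMQ.ne', div_eq_div_iff (by positivity) (by positivity)]
    linear_combination ((M:ℚ) * w) * this
  have hkey : (2 * w * d : ℕ) < M := by
    calc 2 * w * d ≤ 2 * w * 2 ^ 64 := by
          exact Nat.mul_le_mul_left _ hd64
      _ ≤ 2 * 2 ^ 64 * 2 ^ 64 := Nat.mul_le_mul_right _ (by omega)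
      _ < M := by norm_num [hM]
  have hQ : |(T:ℚ) / M - q| < 1 / (2 * (q.den : ℚ) ^ 2) := by
    rw [abs_sub_comm, hdiff, abs_of_nonneg (by positivity)]
    have hdenQ : (q.den : ℚ) ≤ w := by exact_mod_cast hden
    have hdenQ0 : (0:ℚ) < q.den := by exact_mod_cast hdenpos
    rw [div_lt_div_iff₀ (by positivity) (by positivity)]
    have hkeyQ : (2*(w:ℚ)*d)*w < (M:ℚ)*w := by
      have h' : ((2*w*d : ℕ):ℚ) < ((M : ℕ):ℚ) := Nat.cast_lt.2 hkey
      push_cast at h'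
      exact mul_lt_mul_of_pos_right h' hwQ
    have hdQ : (0:ℚ) ≤ (d:ℚ) := by positivity
    calc (d:ℚ) * (2 * (q.den:ℚ)^2) ≤ (d:ℚ) * (2 * (w:ℚ)^2) := by gcongr
      _ = (2*(w:ℚ)*d)*w := by ring
      _ < (M:ℚ)*w := hkeyQ
      _ = 1 * ((M:ℚ)*w) := by ring
  -- move to ℝ and apply Legendre's theorem
  set q₀ : ℚ := (T:ℚ) / M with hq₀
  have hQ' : |(q₀ : ℝ) - (q : ℝ)| < 1 / (2 * (q.den : ℝ) ^ 2) := by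
    have := (Rat.cast_lt (K := ℝ)).2 hQ
    push_cast at this ⊢
    convert this using 2 <;> push_cast [hq₀] <;> ring
  obtain ⟨k, hk⟩ := Real.exists_convs_eq_rat (ξ := (q₀ : ℝ)) (by exact_mod_cast hQ')
  refine ⟨k, ?_⟩
  have := (GenContFract.my_cast_convs q₀ k).symm.trans hk
  exact_mod_cast this
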